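/- Let E be a real Banach space and let K be a convex subset of E that is compact and metrizable in the weak topology of E. Then K is the closed convex hull of its exposed points: K equals the norm closure of the convex hull of Exp(K), which also equals the weak closure of the convex hull of Exp(K). -/

import Mathlib

open TopologicalSpace

namespace Stmt10Aux
variable {E : Type*} [NormedAddCommGroup E] [NormedSpace ℝ E]

lemma weak_t2 : T2Space (WeakSpace ℝ E) := by
  constructor
  intro x y hxy
  have hne : (show E from x) - (show E from y) ≠ 0 := sub_ne_zero.2 fun hh => hxy hh
  obtain ⟨f, -, hf⟩ := exists_dual_vector ℝ _ (norm_ne_zero_iff.2 hne)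
  have hcont : Continuous fun z : WeakSpace ℝ E => f z :=
    WeakBilin.eval_continuous (topDualPairing ℝ E).flip f
  refine separated_by_continuous hcont ?_
  have h0 : f ((show E from x) - (show E from y)) ≠ 0 := by
    have : f ((show E from x) - (show E from y))
        = ‖(show E from x) - (show E from y)‖ := by exact_mod_cast hf
    rw [this]; exact norm_ne_zero_iff.2 hne
  rw [map_sub] at h0
  exact sub_ne_zero.1 h0

lemma weak_bounded [CompleteSpace E] {K : Set (WeakSpace ℝ E)} (hcomp : IsCompact K) :
    ∃ R : ℝ, ∀ p ∈ K, ‖show E from p‖ ≤ R := by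
  have h := banach_steinhaus (E := StrongDual ℝ E) (F := ℝ) (𝕜 := ℝ) (𝕜₂ := ℝ)
    (g := fun p : K => NormedSpace.inclusionInDoubleDual ℝ E (show E from p.1)) ?_
  · obtain ⟨C, hC⟩ := h
    refine ⟨C, fun p hp => ?_⟩
    have := hC ⟨p, hp⟩
    rwa [← (NormedSpace.inclusionInDoubleDualLi (𝕜 := ℝ) (E := E)).norm_map (show E from p)]
  · intro f
    have hcont : Continuous fun z : WeakSpace ℝ E => f z :=
      WeakBilin.eval_continuous (topDualPairing ℝ E).flip f
    obtain ⟨M, hM⟩ := (hcomp.image hcont).isBounded.exists_norm_le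
    exact ⟨M, fun p => hM _ ⟨p.1, p.2, rfl⟩⟩

theorem sep_family {K : Set (WeakSpace ℝ E)} (hcomp : IsCompact K)
    (hmetr : MetrizableSpace K) :
    ∃ f : ℕ → (E →L[ℝ] ℝ), ∀ p ∈ K, ∀ q ∈ K, (∀ n, f n p = f n q) → p = q := by
  letI : MetricSpace K := metrizableSpaceMetric K
  haveI : CompactSpace K := isCompact_iff_compactSpace.mp hcomp
  let rK : (E →L[ℝ] ℝ) → C(K, ℝ) := fun g =>
    ⟨fun p => g p.1, (WeakBilin.eval_continuous (topDualPairing ℝ E).flip g).comp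
      continuous_subtype_val⟩
  let S : Set C(K, ℝ) := Set.range rK
  obtain ⟨u, huc, hud⟩ := TopologicalSpace.exists_countable_dense ↥S
  choose pre hpre using fun c : ↥S => c.2
  let A : Set (E →L[ℝ] ℝ) := insert 0 (pre '' u)
  have hAc : A.Countable := ((huc.image pre).insert 0)
  obtain ⟨f, hf⟩ := Set.Countable.exists_eq_range hAc ⟨0, Set.mem_insert _ _⟩
  refine ⟨f, fun p hp q hq hall => ?_⟩
  by_contra hne
  have hne' : (show E from p) - (show E from q) ≠ 0 := sub_ne_zero.2 fun hh => hne hh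
  obtain ⟨g, -, hg⟩ := exists_dual_vector ℝ _ (norm_ne_zero_iff.2 hne')
  have hgne : g p ≠ g q := by
    have h0 : g ((show E from p) - (show E from q))
        = ‖(show E from p) - (show E from q)‖ := by exact_mod_cast hg
    have h1 : g ((show E from p) - (show E from q)) ≠ 0 := by
      rw [h0]; exact norm_ne_zero_iff.2 hne'
    rw [map_sub] at h1; exact sub_ne_zero.1 h1
  set ε := |g p - g q| with hε
  have hεpos : 0 < ε := abs_pos.2 (sub_ne_zero.2 hgne)
  have hmem : rK g ∈ S := Set.mem_range_self _
  obtain ⟨c, hcu, hcd⟩ : ∃ c ∈ u, dist (⟨rK g, hmem⟩ : ↥S) c < ε / 2 := by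
    have := hud.exists_dist_lt (⟨rK g, hmem⟩ : ↥S) (half_pos hεpos)
    tauto
  set h := pre c with hh
  have hhA : h ∈ A := Set.mem_insert_iff.2 (Or.inr ⟨c, hcu, rfl⟩)
  have hrk : rK h = (c : C(K, ℝ)) := hpre c
  have hdist : dist (rK h) (rK g) < ε / 2 := by
    rw [hrk, dist_comm]
    rwa [Subtype.dist_eq] at hcd
  have key : ∀ x : K, |h x.1 - g x.1| < ε / 2 := by
    intro x
    have := ContinuousMap.dist_apply_le_dist (f := rK h) (g := rK g) x
    rw [Real.dist_eq] at this
    exact lt_of_le_of_lt this hdist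
  have heq : h p = h q := by
    obtain ⟨n, hn⟩ : h ∈ Set.range f := hf ▸ hhA
    rw [← hn]; exact hall n
  have h1 := key ⟨p, hp⟩
  have h2 := key ⟨q, hq⟩
  have hlt : |g p - g q| < ε := by
    calc |g p - g q| = |(g p - h p) + (h q - g q)| := by rw [heq]; ring_nf
    _ ≤ |g p - h p| + |h q - g q| := abs_add_le _ _
    _ < ε / 2 + ε / 2 := by
        rw [abs_sub_comm (g p)]
        exact add_lt_add h1 h2
    _ = ε := add_halves ε
  exact absurd hlt (by rw [hε]; exact lt_irrefl _)

variable {E : Type*} [NormedAddCommGroup E] [NormedSpace ℝ E]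

variable (a : ℕ → E →L[ℝ] ℝ)

/-- positive semidefinite bilinear form from the separating family -/
noncomputable def B (w y : E) : ℝ := ∑' n, a n w * a n y

/-- the associated functional `B w ·` as a continuous linear map -/
noncomputable def G (w : E) : E →L[ℝ] ℝ := ∑' n, a n w • a n

variable {a}

lemma apply_le (ha : ∀ n, ‖a n‖ ≤ (1/2)^n) (n : ℕ) (w : E) :
    |a n w| ≤ (1/2)^n * ‖w‖ :=
  le_trans ((a n).le_opNorm w) (by
    have := ha n
    have : ‖a n‖ * ‖w‖ ≤ (1/2)^n * ‖w‖ :=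
      mul_le_mul_of_nonneg_right (ha n) (norm_nonneg w)
    simpa using this)

lemma sum_quarter (c : ℝ) : Summable fun n : ℕ => (1/4 : ℝ)^n * c :=
  (summable_geometric_of_lt_one (by norm_num) (by norm_num)).mul_right c

lemma summable_mul (ha : ∀ n, ‖a n‖ ≤ (1/2)^n) (w y : E) :
    Summable fun n => a n w * a n y := by
  refine Summable.of_norm_bounded (sum_quarter (‖w‖ * ‖y‖)) fun n => ?_
  have h1 := apply_le ha n w
  have h2 := apply_le ha n y
  have hp : (0:ℝ) ≤ (1/2)^n := by positivity
  calc ‖a n w * a n y‖ = |a n w| * |a n y| := abs_mul _ _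
  _ ≤ ((1/2)^n * ‖w‖) * ((1/2)^n * ‖y‖) :=
      mul_le_mul h1 h2 (abs_nonneg _) (by positivity)
  _ = (1/4)^n * (‖w‖ * ‖y‖) := by rw [show ((1:ℝ)/4) = (1/2)*(1/2) by norm_num, mul_pow]; ring

lemma B_comm (w y : E) : B a w y = B a y w := by
  unfold B; congr 1; ext n; ring

lemma B_add_right (ha : ∀ n, ‖a n‖ ≤ (1/2)^n) (w y v : E) :
    B a w (y + v) = B a w y + B a w v := by
  unfold B
  rw [← Summable.tsum_add (summable_mul ha w y) (summable_mul ha w v)]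
  congr 1; ext n; rw [map_add]; ring

lemma B_smul_right (w y : E) (t : ℝ) : B a w (t • y) = t * B a w y := by
  unfold B
  rw [← tsum_mul_left]
  congr 1; ext n; rw [map_smul]; simp; ring

lemma B_neg_right (w y : E) : B a w (-y) = - B a w y := by
  unfold B
  rw [← tsum_neg]
  congr 1; ext n; rw [map_neg]; ring

lemma B_sub_right (ha : ∀ n, ‖a n‖ ≤ (1/2)^n) (w y v : E) :
    B a w (y - v) = B a w y - B a w v := by
  rw [sub_eq_add_neg, B_add_right ha, B_neg_right]; ring

lemma B_self_nonneg (w : E) : 0 ≤ B a w w :=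
  tsum_nonneg fun n => mul_self_nonneg _

lemma B_self_pos (ha : ∀ n, ‖a n‖ ≤ (1/2)^n) {w : E} (hw : ∃ n, a n w ≠ 0) :
    0 < B a w w := by
  obtain ⟨n, hn⟩ := hw
  refine Summable.tsum_pos (summable_mul ha w w) (fun m => mul_self_nonneg _) n ?_
  rcases hn.lt_or_gt with h | h
  · exact mul_pos_of_neg_of_neg h h
  · exact mul_pos h h

lemma summable_G (ha : ∀ n, ‖a n‖ ≤ (1/2)^n) (w : E) :
    Summable fun n => a n w • a n := by
  refine Summable.of_norm_bounded (sum_quarter ‖w‖) fun n => ?_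
  have h1 := apply_le ha n w
  have h2 := ha n
  refine le_trans (ContinuousLinearMap.opNorm_smul_le (a n w) (a n)) ?_
  calc ‖a n w‖ * ‖a n‖ ≤ ((1/2)^n * ‖w‖) * (1/2)^n := by
        refine mul_le_mul ?_ h2 (norm_nonneg _) (by positivity)
        simpa using h1
  _ = (1/4)^n * ‖w‖ := by rw [show ((1:ℝ)/4) = (1/2)*(1/2) by norm_num, mul_pow]; ring

lemma G_apply (ha : ∀ n, ‖a n‖ ≤ (1/2)^n) (w y : E) : G a w y = B a w y := by
  unfold G B
  have := ContinuousLinearMap.map_tsum (f := fun n => a n w • a n)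
    (ContinuousLinearMap.apply ℝ ℝ y) (summable_G ha w)
  simpa [ContinuousLinearMap.smul_apply, smul_eq_mul] using this

/-- expansion of the quadratic form -/
lemma Q_expand (ha : ∀ n, ‖a n‖ ≤ (1/2)^n) (w v : E) :
    B a (w + v) (w + v) = B a w w + 2 * B a w v + B a v v := by
  rw [B_add_right ha, B_comm (w+v) w, B_comm (w+v) v, B_add_right ha, B_add_right ha,
    B_comm v w]
  ring

lemma Q_smul (w : E) (t : ℝ) : B a (t • w) (t • w) = t^2 * B a w w := by
  rw [B_smul_right, B_comm, B_smul_right, B_comm]; ring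

/-- continuity on a bounded set in the weak topology -/
lemma Q_contOn {K : Set (WeakSpace ℝ E)} {R : ℝ}
    (ha : ∀ n, ‖a n‖ ≤ (1/2)^n)
    (hKb : ∀ p ∈ K, ‖show E from p‖ ≤ R) (z : E) :
    Continuous fun y : K => B a ((show E from y.1) - z) ((show E from y.1) - z) := by
  unfold B
  refine continuous_tsum (f := fun n (y : K) =>
      a n ((show E from y.1) - z) * a n ((show E from y.1) - z)) ?_ (sum_quarter ((R + ‖z‖)^2)) ?_
  · intro n
    have hev : Continuous fun y : K => a n ((show E from y.1) - z) := by
      have h1 : Continuous fun y : K => a n y.1 :=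
        (WeakBilin.eval_continuous (topDualPairing ℝ E).flip (a n)).comp continuous_subtype_val
    
      have : (fun y : K => a n ((show E from y.1) - z)) = fun y : K => a n y.1 - a n z := by
        ext y; rw [map_sub]
      rw [this]
      exact h1.sub continuous_const
    exact hev.mul hev
  · intro n y
    have hb : ‖(show E from y.1) - z‖ ≤ R + ‖z‖ :=
      le_trans (norm_sub_le _ _) (add_le_add_left (hKb y.1 y.2) _)
    have h1 : |a n ((show E from y.1) - z)| ≤ (1/2)^n * (R + ‖z‖) :=
      le_trans (apply_le ha n _) (by
        refine mul_le_mul_of_nonneg_left hb (by positivity))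
    calc ‖a n ((show E from y.1) - z) * a n ((show E from y.1) - z)‖
        = |a n _| * |a n _| := abs_mul _ _
    _ ≤ ((1/2)^n * (R + ‖z‖)) * ((1/2)^n * (R + ‖z‖)) := by
        exact mul_le_mul h1 h1 (abs_nonneg _) (le_trans (abs_nonneg _) h1)
    _ = (1/4)^n * (R + ‖z‖)^2 := by rw [show ((1:ℝ)/4) = (1/2)*(1/2) by norm_num, mul_pow]; ring

/-- bound on the quadratic form -/
lemma Q_bound (ha : ∀ n, ‖a n‖ ≤ (1/2)^n) (w : E) :
    B a w w ≤ 2 * ‖w‖^2 := by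
  unfold B
  have h := Summable.tsum_le_tsum (f := fun n => a n w * a n w) (g := fun n => (1/4:ℝ)^n * ‖w‖^2)
    (fun n => by
      have h1 := apply_le ha n w
      calc a n w * a n w = |a n w| * |a n w| := (abs_mul_abs_self _).symm
      _ ≤ ((1/2)^n * ‖w‖) * ((1/2)^n * ‖w‖) := by
          refine mul_le_mul h1 h1 (abs_nonneg _) (by positivity)
      _ = (1/4)^n * ‖w‖^2 := by rw [show ((1:ℝ)/4) = (1/2)*(1/2) by norm_num, mul_pow]; ring)
    (summable_mul ha w w) (sum_quarter (‖w‖^2))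
  refine h.trans ?_
  rw [tsum_mul_right, tsum_geometric_of_lt_one (by norm_num) (by norm_num)]
  nlinarith [sq_nonneg ‖w‖]

lemma far {K : Set (WeakSpace ℝ E)} {R : ℝ} (hcomp : IsCompact K)
    (ha : ∀ n, ‖a n‖ ≤ (1/2)^n)
    (hKb : ∀ p ∈ K, ‖show E from p‖ ≤ R)
    (hsep : ∀ p ∈ K, ∀ q ∈ K, (∀ n, a n p = a n q) → p = q)
    (hK : K.Nonempty) (z : E) :
    ∃ p ∈ K,
      (∀ y ∈ K, B a ((show E from y) - z) ((show E from y) - z)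
          ≤ B a ((show E from p) - z) ((show E from p) - z)) ∧
      ∃ g : E →L[ℝ] ℝ, ∀ q ∈ K, q ≠ p → g q < g p := by
  have hcont : ContinuousOn
      (fun y : WeakSpace ℝ E => B a ((show E from y) - z) ((show E from y) - z)) K :=
    continuousOn_iff_continuous_restrict.2 (Q_contOn ha hKb z)
  obtain ⟨p, hpK, hmax⟩ := hcomp.exists_isMaxOn hK hcont
  set P : E := show E from p with hP
  refine ⟨p, hpK, fun y hy => hmax hy, G a (P - z), fun q hq hne => ?_⟩
  set Qq : E := show E from q with hQq
  have hd : ∃ n, a n (Qq - P) ≠ 0 := by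
    by_contra hcon
    push_neg at hcon
    refine hne (hsep q hq p hpK fun n => ?_)
    have := hcon n
    rw [map_sub, sub_eq_zero] at this
    exact this
  have hQd : 0 < B a (Qq - P) (Qq - P) := B_self_pos ha hd
  have hle : B a (Qq - z) (Qq - z) ≤ B a (P - z) (P - z) := hmax hq
  have hexp : B a (Qq - z) (Qq - z)
      = B a (P - z) (P - z) + 2 * B a (P - z) (Qq - P) + B a (Qq - P) (Qq - P) := by
    have h0 : Qq - z = (P - z) + (Qq - P) := by abel
    rw [h0, Q_expand ha]
  have hBneg : B a (P - z) (Qq - P) < 0 := by nlinarith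
  have : G a (P - z) Qq < G a (P - z) P := by
    rw [G_apply ha, G_apply ha]
    have := B_sub_right ha (P - z) Qq P
    nlinarith
  exact this

theorem core {K : Set (WeakSpace ℝ E)} (hconv : Convex ℝ K) (hcomp : IsCompact K)
    (ha : ∀ n, ‖a n‖ ≤ (1/2)^n)
    (hsep : ∀ p ∈ K, ∀ q ∈ K, (∀ n, a n p = a n q) → p = q)
    {R : ℝ} (hKb : ∀ p ∈ K, ‖show E from p‖ ≤ R)
    (hKcl : IsClosed K)
    (Exp : Set (WeakSpace ℝ E))
    (hExp : Exp = {p ∈ K | ∃ g : E →L[ℝ] ℝ, ∀ q ∈ K, q ≠ p → g q < g p}) :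
    K ⊆ closure (convexHull ℝ Exp) := by
  intro x hx
  by_contra hxD
  set D := closure (convexHull ℝ Exp) with hD
  have hExpK : Exp ⊆ K := by rw [hExp]; exact fun p hp => hp.1
  have hDK : D ⊆ K := closure_minimal (convexHull_min hExpK hconv) hKcl
  haveI : ContinuousSMul ℝ (WeakSpace ℝ E) :=
    (inferInstance : ContinuousSMul ℝ (WeakBilin (topDualPairing ℝ E).flip))
  have hDconv : Convex ℝ D := (convex_convexHull ℝ Exp).closure
  have hDcomp : IsCompact D := hcomp.of_isClosed_subset isClosed_closure hDK
  have hDb : ∀ p ∈ D, ‖show E from p‖ ≤ R := fun p hp => hKb p (hDK hp)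
  -- D is nonempty
  have hDne : D.Nonempty := by
    obtain ⟨p, hpK, -, g, hg⟩ := far hcomp ha hKb hsep ⟨x, hx⟩ 0
    have hpE : p ∈ Exp := by rw [hExp]; exact ⟨hpK, g, hg⟩
    exact ⟨p, subset_closure (subset_convexHull ℝ Exp hpE)⟩
  set X : E := show E from x with hX
  -- minimize distance-like functional over D
  have hcont : ContinuousOn
      (fun y : WeakSpace ℝ E => B a ((show E from y) - X) ((show E from y) - X)) D :=
    continuousOn_iff_continuous_restrict.2 (Q_contOn ha hDb X)
  obtain ⟨x₀, hx₀D, hmin⟩ := hDcomp.exists_isMinOn hDne hcont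
  set X₀ : E := show E from x₀ with hX₀
  set u : E := X₀ - X with hu
  have hQu : 0 < B a u u := by
    refine B_self_pos ha ?_
    by_contra hcon
    push_neg at hcon
    refine hxD ?_
    have : x = x₀ := by
      refine hsep x hx x₀ (hDK hx₀D) fun n => ?_
      have := hcon n
      rw [map_sub, sub_eq_zero] at this
      exact this.symm
    exact (congrArg (· ∈ D) this).mpr hx₀D
  -- variational inequality
  have hvar : ∀ y ∈ D, 0 ≤ B a u ((show E from y) - X₀) := by
    intro y hy
    set d : E := (show E from y) - X₀ with hdd
    set β := B a u d with hβ
    set γ := B a d d with hγ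
    have hγ0 : 0 ≤ γ := B_self_nonneg d
    have key : ∀ t : ℝ, 0 < t → t ≤ 1 → 0 ≤ 2 * t * β + t^2 * γ := by
      intro t ht0 ht1
      have hyt : x₀ + t • (y - x₀) ∈ D :=
        hDconv.add_smul_sub_mem hx₀D hy ⟨ht0.le, ht1⟩
      have hm := hmin hyt
      have hrw : (show E from (x₀ + t • (y - x₀))) - X = u + t • d := by
        show X₀ + t • ((show E from y) - X₀) - X = u + t • d
        rw [hu, hdd]; abel
      have hex : B a (u + t • d) (u + t • d) = B a u u + 2 * (t * β) + t^2 * γ := by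
        rw [Q_expand ha, B_smul_right, Q_smul, hβ, hγ]
      simp only [IsMinOn, IsMinFilter] at hm
      have hm' : B a u u ≤ B a ((show E from (x₀ + t • (y - x₀))) - X)
          ((show E from (x₀ + t • (y - x₀))) - X) := by
        have := hmin hyt
        simpa [hu] using this
      rw [hrw, hex] at hm'
      nlinarith
    by_contra hneg
    push_neg at hneg
    rcases le_or_gt γ 0 with hγle | hγpos
    · have := key 1 one_pos le_rfl
      nlinarith
    · have ht0 : 0 < min 1 (-β / γ) := by
        refine lt_min one_pos (div_pos (by linarith) hγpos)
      have := key (min 1 (-β / γ)) ht0 (min_le_left _ _)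
      have htle : min 1 (-β / γ) ≤ -β / γ := min_le_right _ _
      set t := min 1 (-β / γ)
      have h1 : t * γ ≤ -β := (le_div_iff₀ hγpos).mp htle
      nlinarith [mul_pos ht0 (neg_pos.2 hneg)]
  -- bound on D
  have hM : ∀ y ∈ D, B a ((show E from y) - X₀) ((show E from y) - X₀) ≤ 2 * (2*|R|)^2 := by
    intro y hy
    refine (Q_bound ha _).trans ?_
    have h1 : ‖(show E from y) - X₀‖ ≤ 2 * |R| := by
      refine (norm_sub_le _ _).trans ?_
      have := hDb y hy
      have := hDb x₀ hx₀D
      have hRa : R ≤ |R| := le_abs_self R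
      rw [hX₀]
      nlinarith [norm_nonneg (show E from y), norm_nonneg X₀]
    nlinarith [norm_nonneg ((show E from y) - X₀)]
  set M : ℝ := 2 * (2*|R|)^2 with hMdef
  have hM0 : 0 ≤ M := by positivity
  set Qu := B a u u with hQudef
  set s : ℝ := M / (2 * Qu) + 1 with hs
  have hs0 : 0 < s := by positivity
  have hsQu : M < 2 * s * Qu := by
    rw [hs]
    have : M / (2 * Qu) * (2 * Qu) = M := by field_simp
    nlinarith
  set z : E := X₀ + s • u with hz
  -- farthest point from z
  obtain ⟨p, hpK, hmax, g, hg⟩ := far hcomp ha hKb hsep ⟨x, hx⟩ z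
  have hpE : p ∈ Exp := by rw [hExp]; exact ⟨hpK, g, hg⟩
  have hpD : p ∈ D := subset_closure (subset_convexHull ℝ Exp hpE)
  set P : E := show E from p with hP
  -- x is farther from z than any point of D
  have hyz : ∀ y ∈ D, B a ((show E from y) - z) ((show E from y) - z) < B a (X - z) (X - z) := by
    intro y hy
    set d : E := (show E from y) - X₀ with hdd
    have h1 : (show E from y) - z = d + (-s) • u := by rw [hdd, hz]; module
    have h2 : X - z = (-(1+s)) • u := by rw [hz, hu]; module
    have h3 : B a ((show E from y) - z) ((show E from y) - z)
        = B a d d + 2 * (-s * B a d u) + s^2 * Qu := by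
      rw [h1, Q_expand ha, B_smul_right, Q_smul, hQudef]
      ring_nf
    have h4 : B a (X - z) (X - z) = (1+s)^2 * Qu := by
      rw [h2, Q_smul, hQudef]; ring_nf
    have h5 : 0 ≤ B a d u := by
      have := hvar y hy
      rwa [B_comm] at this
    have h6 : B a d d ≤ M := hM y hy
    rw [h3, h4]
    nlinarith
  have hA := hmax x hx
  have hB := hyz p hpD
  rw [← hX, ← hP] at *
  exact absurd (hA.trans_lt hB) (lt_irrefl _)

end Stmt10Aux

/-- Let `E` be a real Banach space and `K` a convex, weakly compact, weakly metrizable subset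
of `E`. Then `K` is the weakly closed convex hull of its exposed points, which coincides with
the norm closed convex hull of its exposed points. -/
theorem stmt_10 {E : Type*} [NormedAddCommGroup E] [NormedSpace ℝ E] [CompleteSpace E]
    (K : Set (WeakSpace ℝ E)) (hconv : Convex ℝ K) (hcomp : IsCompact K)
    (hmetr : TopologicalSpace.MetrizableSpace K)
    (Exp : Set (WeakSpace ℝ E))
    (hExp : Exp = {p ∈ K | ∃ g : E →L[ℝ] ℝ, ∀ q ∈ K, q ≠ p → g q < g p}) :
    K = closure (convexHull ℝ Exp) ∧
      (show Set E from K) = closure (show Set E from convexHull ℝ Exp) := by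
  classical
  haveI : T2Space (WeakSpace ℝ E) := Stmt10Aux.weak_t2
  have hKcl : IsClosed K := hcomp.isClosed
  obtain ⟨R, hKb⟩ := Stmt10Aux.weak_bounded hcomp
  obtain ⟨f, hfsep⟩ := Stmt10Aux.sep_family hcomp hmetr
  -- normalize the family
  set a : ℕ → E →L[ℝ] ℝ := fun n => ((1/2 : ℝ)^n / (1 + ‖f n‖)) • f n with haa
  have hden : ∀ n, (0:ℝ) < 1 + ‖f n‖ := fun n => by positivity
  have hc : ∀ n, (0:ℝ) < (1/2 : ℝ)^n / (1 + ‖f n‖) := fun n => by positivity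
  have ha : ∀ n, ‖a n‖ ≤ (1/2 : ℝ)^n := by
    intro n
    rw [haa]
    refine le_trans (ContinuousLinearMap.opNorm_smul_le _ _) ?_
    rw [Real.norm_eq_abs, abs_of_pos (hc n), div_mul_eq_mul_div, div_le_iff₀ (hden n)]
    have h1 : (0:ℝ) ≤ (1/2:ℝ)^n := by positivity
    nlinarith [norm_nonneg (f n)]
  have hsep : ∀ p ∈ K, ∀ q ∈ K, (∀ n, a n p = a n q) → p = q := by
    intro p hp q hq hall
    refine hfsep p hp q hq fun n => ?_
    have := hall n
    rw [haa] at this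
    simp only [ContinuousLinearMap.smul_apply, smul_eq_mul] at this
    exact mul_left_cancel₀ (ne_of_gt (hc n)) this
  have hExpK : Exp ⊆ K := by rw [hExp]; exact fun p hp => hp.1
  have hsub : K ⊆ closure (convexHull ℝ Exp) :=
    Stmt10Aux.core hconv hcomp ha hsep hKb hKcl Exp hExp
  have hsup : closure (convexHull ℝ Exp) ⊆ K :=
    closure_minimal (convexHull_min hExpK hconv) hKcl
  have conj1 : K = closure (convexHull ℝ Exp) := Set.Subset.antisymm hsub hsup
  refine ⟨conj1, ?_⟩
  -- Mazur: the norm closure and the weak closure of a convex set coincide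
  have hSconv : Convex ℝ (show Set E from convexHull ℝ Exp) := convex_convexHull ℝ Exp
  have himg : ∀ s : Set E, toWeakSpace ℝ E '' s = (show Set (WeakSpace ℝ E) from s) := by
    intro s
    ext y
    constructor
    · rintro ⟨w, hw, rfl⟩; exact hw
    · intro hy; exact ⟨y, hy, rfl⟩
  have h := hSconv.toWeakSpace_closure (𝕜 := ℝ)
  rw [himg, himg] at h
  have hid : (show Set (WeakSpace ℝ E) from (show Set E from convexHull ℝ Exp))
      = convexHull ℝ Exp := rfl
  rw [hid] at h
  exact (h.trans conj1.symm).symm
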